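/- Fix λ > 0 and x ∈ ℝ. Define, for a probability measure ρ on ℝ, the probability measure Σ_x(ρ) = Σ_{n=0}^∞ (e^{−λ} λ^n / n!) · (h_{n+1})_*(δ_x ∗ ρ^{∗n}), where ρ^{∗n} is the n-fold convolution power of ρ (with ρ^{∗0} = δ_0), ∗ denotes convolution of measures, h_k : ℝ → ℝ is y ↦ y/k, and (h_k)_* is the pushforward. Then the map ρ ↦ Σ_x(ρ) is sequentially continuous on probability measures on ℝ: if ρ_n → ρ in the sense that ∫ φ dρ_n → ∫ φ dρ for every continuous compactly supported φ : ℝ → ℝ, then ∫ φ dΣ_x(ρ_n) → ∫ φ dΣ_x(ρ) for every continuous compactly supported φ. -/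

import Mathlib

open MeasureTheory Filter

/-- The `n`-fold convolution power of a measure on `ℝ`, with `ρ^{∗0} = δ₀`. -/
noncomputable def convPow (ρ : Measure ℝ) : ℕ → Measure ℝ
  | 0 => Measure.dirac 0
  | n + 1 => (convPow ρ n).conv ρ

/-- `Σ_x(ρ) = Σ_{n=0}^∞ (e^{−λ} λ^n / n!) · (h_{n+1})_*(δ_x ∗ ρ^{∗n})`,
where `h_k(y) = y/k`. -/
noncomputable def SigmaX (l x : ℝ) (ρ : Measure ℝ) : Measure ℝ :=
  Measure.sum (fun n : ℕ =>
    ENNReal.ofReal (Real.exp (-l) * l ^ n / n.factorial) •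
      ((Measure.dirac x).conv (convPow ρ n)).map (fun y => y / ((n : ℝ) + 1)))

/-- Vague convergence: convergence of the integrals against every continuous
compactly supported test function. -/
def VagueTendsto (ρs : ℕ → Measure ℝ) (ρ : Measure ℝ) : Prop :=
  ∀ φ : ℝ → ℝ, Continuous φ → HasCompactSupport φ →
    Tendsto (fun n => ∫ x, φ x ∂(ρs n)) atTop (nhds (∫ x, φ x ∂ρ))

open Set
open scoped Topology

section Aux

lemma integrable_of_bdd {α : Type*} [MeasurableSpace α] [TopologicalSpace α]
    [OpensMeasurableSpace α] (μ : Measure α) [IsFiniteMeasure μ] {f : α → ℝ}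
    (hf : Continuous f) (C : ℝ) (hC : ∀ a, |f a| ≤ C) : Integrable f μ :=
  ⟨hf.aestronglyMeasurable,
    HasFiniteIntegral.of_bounded (C := C) (ae_of_all _ (fun a => by
      simpa [Real.norm_eq_abs] using hC a))⟩

lemma convPow_prob (ρ : Measure ℝ) [IsProbabilityMeasure ρ] :
    ∀ n, IsProbabilityMeasure (convPow ρ n)
  | 0 => by rw [convPow]; infer_instance
  | n + 1 => by rw [convPow]; haveI := convPow_prob ρ n; infer_instance

lemma integral_conv (κ ν : Measure ℝ) [IsProbabilityMeasure κ] [IsProbabilityMeasure ν]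
    {f : ℝ → ℝ} (hf : Continuous f) (C : ℝ) (hC : ∀ a, |f a| ≤ C) :
    ∫ t, f t ∂(κ.conv ν) = ∫ y, ∫ z, f (y + z) ∂ν ∂κ := by
  have h1 : κ.conv ν = Measure.map (fun p : ℝ × ℝ => p.1 + p.2) (κ.prod ν) := rfl
  rw [h1, integral_map (by fun_prop) hf.aestronglyMeasurable]
  exact integral_prod _ (integrable_of_bdd _ (hf.comp continuous_add) C (fun p => hC _))

/-- cutoff function -/
noncomputable def cut (R : ℝ) (t : ℝ) : ℝ := max 0 (min 1 (R + 1 - |t|))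

lemma cut_lipschitz (R : ℝ) : LipschitzWith 1 (cut R) := by
  have habs : LipschitzWith 1 (fun t : ℝ => |t|) :=
    LipschitzWith.of_dist_le_mul (fun a b => by
      simp only [Real.dist_eq, NNReal.coe_one, one_mul]
      exact abs_abs_sub_abs_le_abs_sub a b)
  have h2 : LipschitzWith 1 (fun t : ℝ => R + 1 - |t|) :=
    LipschitzWith.of_dist_le_mul (fun a b => by
      simp only [Real.dist_eq, NNReal.coe_one, one_mul]
      have := abs_abs_sub_abs_le_abs_sub a b
      have h' : R + 1 - |a| - (R + 1 - |b|) = -(|a| - |b|) := by ring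
      rw [h', abs_neg]; exact this)
  exact (h2.const_min 1).const_max 0

lemma cut_continuous (R : ℝ) : Continuous (cut R) := (cut_lipschitz R).continuous

lemma cut_nonneg (R t : ℝ) : 0 ≤ cut R t := le_max_left _ _

lemma cut_le_one (R t : ℝ) : cut R t ≤ 1 := by
  rw [cut]; rcases le_total (min 1 (R + 1 - |t|)) 0 with h | h
  · simpa [max_eq_left h]
  · rw [max_eq_right h]; exact min_le_left _ _

lemma cut_abs_le_one (R t : ℝ) : |cut R t| ≤ 1 := by
  rw [abs_of_nonneg (cut_nonneg R t)]; exact cut_le_one R t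

lemma cut_eq_one {R t : ℝ} (h : |t| ≤ R) : cut R t = 1 := by
  rw [cut, min_eq_left (by linarith), max_eq_right (by linarith)]

lemma cut_eq_zero {R t : ℝ} (h : R + 1 ≤ |t|) : cut R t = 0 := by
  rw [cut, max_eq_left]
  exact le_trans (min_le_right _ _) (by linarith)

lemma cut_hcs (R : ℝ) : HasCompactSupport (cut R) :=
  HasCompactSupport.intro (isCompact_Icc (a := -(R+1)) (b := R+1)) (fun t ht => by
    apply cut_eq_zero
    rw [mem_Icc, not_and_or, not_le, not_le] at ht
    rcases le_total t 0 with hts | hts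
    · rw [abs_of_nonpos hts]
      rcases ht with h | h <;> linarith
    · rw [abs_of_nonneg hts]
      rcases ht with h | h <;> linarith)

lemma exists_cut_integral (μ : Measure ℝ) [IsProbabilityMeasure μ] {η : ℝ} (hη : 0 < η) :
    ∃ R : ℝ, 1 - η < ∫ t, cut R t ∂μ := by
  have hmono : Monotone (fun n : ℕ => Icc (-(n : ℝ)) n) := by
    intro a b hab
    apply Icc_subset_Icc <;> [simp; skip] <;> exact_mod_cast hab
  have hU : (⋃ n : ℕ, Icc (-(n : ℝ)) (n : ℝ)) = univ := by
    ext t; simp only [mem_iUnion, mem_Icc, mem_univ, iff_true]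
    obtain ⟨n, hn⟩ := exists_nat_ge |t|
    exact ⟨n, by linarith [neg_abs_le t], by linarith [le_abs_self t]⟩
  have h1 := tendsto_measure_iUnion_atTop (μ := μ) hmono
  rw [hU, measure_univ] at h1
  have h2 : Tendsto (fun n : ℕ => (μ (Icc (-(n : ℝ)) n)).toReal) atTop (𝓝 1) := by
    have := (ENNReal.tendsto_toReal (a := 1) (by simp)).comp h1
    simpa [Function.comp_def] using this
  have h3 : ∀ᶠ n : ℕ in atTop, 1 - η < (μ (Icc (-(n : ℝ)) n)).toReal :=
    h2.eventually (eventually_gt_nhds (by linarith))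
  obtain ⟨n, hn⟩ := h3.exists
  refine ⟨(n : ℝ), lt_of_lt_of_le hn ?_⟩
  have h4 : ∫ t, Set.indicator (Icc (-(n:ℝ)) n) (fun _ => (1:ℝ)) t ∂μ
      = (μ (Icc (-(n:ℝ)) n)).toReal := integral_indicator_one measurableSet_Icc
  rw [← h4]
  apply integral_mono
  · exact (integrable_const (1:ℝ)).indicator measurableSet_Icc
  · exact integrable_of_bdd μ (cut_continuous _) 1 (cut_abs_le_one _)
  · intro t
    by_cases ht : t ∈ Icc (-(n:ℝ)) n
    · rw [Set.indicator_of_mem ht]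
      have : |t| ≤ (n : ℝ) := abs_le.2 ⟨by linarith [ht.1], ht.2⟩
      rw [cut_eq_one this]
    · rw [Set.indicator_of_notMem ht]; exact cut_nonneg _ _

end Aux

section VagueWeak


lemma cut_err (ν : Measure ℝ) [IsProbabilityMeasure ν] {f : ℝ → ℝ} (hf : Continuous f)
    {C : ℝ} (hC : ∀ a, |f a| ≤ C) (R : ℝ) :
    |∫ t, f t ∂ν - ∫ t, f t * cut R t ∂ν| ≤ C * (1 - ∫ t, cut R t ∂ν) := by
  have hC0 : 0 ≤ C := le_trans (abs_nonneg _) (hC 0)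
  have h1 : Integrable f ν := integrable_of_bdd ν hf C hC
  have h2 : Integrable (fun t => f t * cut R t) ν :=
    integrable_of_bdd ν (hf.mul (cut_continuous R)) C (fun t => by
      rw [abs_mul]
      calc |f t| * |cut R t| ≤ C * 1 :=
        mul_le_mul (hC t) (cut_abs_le_one R t) (abs_nonneg _) hC0
      _ = C := mul_one C)
  have hcutint : Integrable (cut R) ν := integrable_of_bdd ν (cut_continuous R) 1 (cut_abs_le_one R)
  have h3 : Integrable (fun t => C * (1 - cut R t)) ν :=
    ((integrable_const (1:ℝ)).sub hcutint).const_mul C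
  rw [← integral_sub h1 h2]
  calc |∫ t, (f t - f t * cut R t) ∂ν| ≤ ∫ t, |f t - f t * cut R t| ∂ν := by
        simpa [Real.norm_eq_abs] using
          norm_integral_le_integral_norm (μ := ν) (fun t => f t - f t * cut R t)
    _ ≤ ∫ t, C * (1 - cut R t) ∂ν := by
        apply integral_mono (h1.sub h2).abs h3
        intro t
        have heq : f t - f t * cut R t = f t * (1 - cut R t) := by ring
        show |f t - f t * cut R t| ≤ C * (1 - cut R t)
        rw [heq, abs_mul, abs_of_nonneg (show (0:ℝ) ≤ 1 - cut R t by linarith [cut_le_one R t])]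
        exact mul_le_mul_of_nonneg_right (hC t) (by linarith [cut_le_one R t])
    _ = C * (1 - ∫ t, cut R t ∂ν) := by
        rw [integral_const_mul, integral_sub (integrable_const _) hcutint]
        simp

/-- Lemma A: vague convergence of probability measures to a probability measure implies
convergence of integrals of bounded continuous functions. -/
lemma tendsto_integral_of_vague {μs : ℕ → Measure ℝ} {μ : Measure ℝ}
    (hμs : ∀ m, IsProbabilityMeasure (μs m)) (hμ : IsProbabilityMeasure μ)
    (h : VagueTendsto μs μ) {f : ℝ → ℝ} (hf : Continuous f) (C : ℝ) (hC : ∀ a, |f a| ≤ C) :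
    Tendsto (fun m => ∫ t, f t ∂(μs m)) atTop (𝓝 (∫ t, f t ∂μ)) := by
  haveI := hμ
  have hC0 : 0 ≤ C := le_trans (abs_nonneg _) (hC 0)
  rw [Metric.tendsto_atTop]
  intro ε hε
  set η := ε / (3 * C + 2) with hηdef
  have hη : 0 < η := by positivity
  obtain ⟨R, hR⟩ := exists_cut_integral μ hη
  have hfχ : Tendsto (fun m => ∫ t, f t * cut R t ∂(μs m)) atTop
      (𝓝 (∫ t, f t * cut R t ∂μ)) := by
    apply h _ (hf.mul (cut_continuous R))
    exact HasCompactSupport.mul_left (cut_hcs R)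
  have hχm : Tendsto (fun m => ∫ t, cut R t ∂(μs m)) atTop (𝓝 (∫ t, cut R t ∂μ)) :=
    h _ (cut_continuous R) (cut_hcs R)
  have hev1 : ∀ᶠ m in atTop, 1 - 2 * η < ∫ t, cut R t ∂(μs m) :=
    hχm.eventually (eventually_gt_nhds (by linarith))
  have hev2 : ∀ᶠ m in atTop,
      dist (∫ t, f t * cut R t ∂(μs m)) (∫ t, f t * cut R t ∂μ) < η := by
    have := hfχ (Metric.ball_mem_nhds _ hη)
    simpa [Metric.mem_ball] using this
  rw [Metric.tendsto_atTop] at hfχ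
  obtain ⟨N, hN⟩ := ((hev1.and hev2).and (eventually_ge_atTop 0)).exists_forall_of_atTop
  refine ⟨N, fun m hm => ?_⟩
  obtain ⟨⟨h1m, h2m⟩, _⟩ := hN m hm
  haveI := hμs m
  have e1 : |∫ t, f t ∂(μs m) - ∫ t, f t * cut R t ∂(μs m)|
      ≤ C * (1 - ∫ t, cut R t ∂(μs m)) := cut_err (μs m) hf hC R
  have e3 : |∫ t, f t ∂μ - ∫ t, f t * cut R t ∂μ| ≤ C * (1 - ∫ t, cut R t ∂μ) :=
    cut_err μ hf hC R
  have b1 : C * (1 - ∫ t, cut R t ∂(μs m)) ≤ C * (2 * η) :=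
    mul_le_mul_of_nonneg_left (by linarith) hC0
  have b3 : C * (1 - ∫ t, cut R t ∂μ) ≤ C * η := mul_le_mul_of_nonneg_left (by linarith) hC0
  rw [Real.dist_eq]
  have tri : |∫ t, f t ∂(μs m) - ∫ t, f t ∂μ|
      ≤ |∫ t, f t ∂(μs m) - ∫ t, f t * cut R t ∂(μs m)|
        + |∫ t, f t * cut R t ∂(μs m) - ∫ t, f t * cut R t ∂μ|
        + |∫ t, f t * cut R t ∂μ - ∫ t, f t ∂μ| := by
    have := abs_sub_le (∫ t, f t ∂(μs m)) (∫ t, f t * cut R t ∂(μs m)) (∫ t, f t ∂μ)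
    have := abs_sub_le (∫ t, f t * cut R t ∂(μs m)) (∫ t, f t * cut R t ∂μ) (∫ t, f t ∂μ)
    linarith
  rw [Real.dist_eq] at h2m
  rw [abs_sub_comm (∫ t, f t * cut R t ∂μ)] at tri
  have hεη : (3 * C + 2) * η = ε := by
    rw [hηdef]; field_simp
  calc |∫ t, f t ∂(μs m) - ∫ t, f t ∂μ|
      ≤ C * (2 * η) + η + C * η := by linarith
    _ < (3 * C + 2) * η := by nlinarith
    _ = ε := hεη

end VagueWeak

section Key

lemma G_bound (ν : Measure ℝ) [IsProbabilityMeasure ν] {f : ℝ → ℝ}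
    {C : ℝ} (hC : ∀ a, |f a| ≤ C) (y : ℝ) : |∫ z, f (y + z) ∂ν| ≤ C := by
  have := norm_integral_le_of_norm_le_const (μ := ν) (f := fun z => f (y + z)) (C := C)
    (ae_of_all _ fun z => by simpa [Real.norm_eq_abs] using hC (y + z))
  simpa [Real.norm_eq_abs, measure_univ] using this

lemma G_mod (ν : Measure ℝ) [IsProbabilityMeasure ν] {f : ℝ → ℝ} (hf : Continuous f)
    {C : ℝ} (hC : ∀ a, |f a| ≤ C) {ε δ : ℝ}
    (hδ : ∀ a b : ℝ, dist a b < δ → dist (f a) (f b) ≤ ε) {y y' : ℝ} (hyy : dist y y' < δ) :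
    dist (∫ z, f (y + z) ∂ν) (∫ z, f (y' + z) ∂ν) ≤ ε := by
  have h1 : Integrable (fun z => f (y + z)) ν :=
    integrable_of_bdd ν (hf.comp (continuous_const.add continuous_id)) C (fun z => hC _)
  have h1' : Integrable (fun z => f (y' + z)) ν :=
    integrable_of_bdd ν (hf.comp (continuous_const.add continuous_id)) C (fun z => hC _)
  rw [dist_eq_norm, ← integral_sub h1 h1']
  have := norm_integral_le_of_norm_le_const (μ := ν)
    (f := fun z => f (y + z) - f (y' + z)) (C := ε)
    (ae_of_all _ fun z => by
      have hd : dist (y + z) (y' + z) < δ := by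
        simpa [Real.dist_eq, add_sub_add_right_eq_sub] using hyy
      simpa [dist_eq_norm] using hδ _ _ hd)
  simpa [measure_univ] using this

lemma G_uc (ν : Measure ℝ) [IsProbabilityMeasure ν] {f : ℝ → ℝ} (hf : UniformContinuous f)
    {C : ℝ} (hC : ∀ a, |f a| ≤ C) : UniformContinuous (fun y => ∫ z, f (y + z) ∂ν) := by
  rw [Metric.uniformContinuous_iff]
  intro ε hε
  obtain ⟨δ, hδ0, hδ⟩ := Metric.uniformContinuous_iff.1 hf (ε/2) (half_pos hε)
  exact ⟨δ, hδ0, fun {a b} hab => lt_of_le_of_lt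
    (G_mod ν hf.continuous hC (fun a b hd => (hδ hd).le) hab) (half_lt_self hε)⟩

lemma key {μs : ℕ → Measure ℝ} {μ : Measure ℝ}
    (hμs : ∀ m, IsProbabilityMeasure (μs m)) (hμ : IsProbabilityMeasure μ)
    (h : VagueTendsto μs μ) :
    ∀ (n : ℕ) (f : ℝ → ℝ), UniformContinuous f → ∀ C : ℝ, (∀ a, |f a| ≤ C) →
      Tendsto (fun m => ∫ t, f t ∂(convPow (μs m) n)) atTop
        (𝓝 (∫ t, f t ∂(convPow μ n))) := by
  haveI := hμ
  intro n
  induction n with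
  | zero =>
    intro f hf C hC
    simp only [convPow, integral_dirac]
    exact tendsto_const_nhds
  | succ n IH =>
    intro f hf C hC
    have hC0 : 0 ≤ C := le_trans (abs_nonneg _) (hC 0)
    haveI hPm : ∀ m, IsProbabilityMeasure (convPow (μs m) n) :=
      fun m => haveI := hμs m; convPow_prob _ n
    haveI hP : IsProbabilityMeasure (convPow μ n) := convPow_prob _ n
    have hfc : Continuous f := hf.continuous
    set G : ℝ → ℝ := fun y => ∫ z, f (y + z) ∂μ with hGdef
    set Gm : ℕ → ℝ → ℝ := fun m y => ∫ z, f (y + z) ∂(μs m) with hGmdef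
    have hrw : ∀ m, ∫ t, f t ∂(convPow (μs m) (n+1)) = ∫ y, Gm m y ∂(convPow (μs m) n) := by
      intro m
      haveI := hμs m
      rw [show convPow (μs m) (n+1) = (convPow (μs m) n).conv (μs m) from rfl]
      exact integral_conv _ _ hfc C hC
    have hrw' : ∫ t, f t ∂(convPow μ (n+1)) = ∫ y, G y ∂(convPow μ n) := by
      rw [show convPow μ (n+1) = (convPow μ n).conv μ from rfl]
      exact integral_conv _ _ hfc C hC
    have hGb : ∀ y, |G y| ≤ C := fun y => G_bound μ hC y
    have hGmb : ∀ m y, |Gm m y| ≤ C := fun m y => haveI := hμs m; G_bound (μs m) hC y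
    have hGuc : UniformContinuous G := G_uc μ hf hC
    have hGmuc : ∀ m, UniformContinuous (Gm m) := fun m => haveI := hμs m; G_uc (μs m) hf hC
    have hIHG : Tendsto (fun m => ∫ y, G y ∂(convPow (μs m) n)) atTop
        (𝓝 (∫ y, G y ∂(convPow μ n))) := IH G hGuc C hGb
    have hdiff : Tendsto (fun m => ∫ y, Gm m y ∂(convPow (μs m) n)
        - ∫ y, G y ∂(convPow (μs m) n)) atTop (𝓝 0) := by
      rw [NormedAddCommGroup.tendsto_nhds_zero]
      intro ε hε
      set η := ε / (2*C+2) with hηdef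
      have hη : 0 < η := by positivity
      obtain ⟨R, hR⟩ := exists_cut_integral (convPow μ n) hη
      have hcutIH : Tendsto (fun m => ∫ t, cut R t ∂(convPow (μs m) n)) atTop
          (𝓝 (∫ t, cut R t ∂(convPow μ n))) :=
        IH (cut R) (cut_lipschitz R).uniformContinuous 1 (cut_abs_le_one R)
      have hev1 : ∀ᶠ m in atTop, 1 - η < ∫ t, cut R t ∂(convPow (μs m) n) :=
        hcutIH.eventually (eventually_gt_nhds hR)
      obtain ⟨δ, hδ0, hδ⟩ := Metric.uniformContinuous_iff.1 hf (η/4) (by positivity)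
      obtain ⟨T, hTK, hTfin, hTcov⟩ := finite_cover_balls_of_compact
        (isCompact_Icc (a := -(R+1)) (b := R+1)) hδ0
      have hpt : ∀ y, Tendsto (fun m => Gm m y) atTop (𝓝 (G y)) := fun y =>
        tendsto_integral_of_vague hμs hμ h
          (hfc.comp (continuous_const.add continuous_id)) C (fun z => hC _)
      have hev2 : ∀ᶠ m in atTop, ∀ i ∈ T, dist (Gm m i) (G i) < η/4 := by
        rw [eventually_all_finite hTfin]
        intro i _
        have := (hpt i) (Metric.ball_mem_nhds _ (show (0:ℝ) < η/4 by positivity))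
        simpa [Metric.mem_ball] using this
      have hevK : ∀ᶠ m in atTop, ∀ y ∈ Icc (-(R+1)) (R+1), |Gm m y - G y| ≤ η := by
        filter_upwards [hev2] with m hm
        intro y hy
        obtain ⟨i, hiT, hyi⟩ : ∃ i ∈ T, y ∈ Metric.ball i δ := by
          have := hTcov hy
          simpa [Set.mem_iUnion] using this
        have hdyi : dist y i < δ := Metric.mem_ball.1 hyi
        haveI := hμs m
        have h1 : dist (Gm m y) (Gm m i) ≤ η/4 :=
          G_mod (μs m) hfc hC (fun a b hd => (hδ hd).le) hdyi
        have h2 : dist (G i) (G y) ≤ η/4 :=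
          G_mod μ hfc hC (fun a b hd => (hδ hd).le) (by rwa [dist_comm])
        have h3 : dist (Gm m i) (G i) < η/4 := hm i hiT
        calc |Gm m y - G y| = dist (Gm m y) (G y) := (Real.dist_eq _ _).symm
          _ ≤ dist (Gm m y) (Gm m i) + dist (Gm m i) (G i) + dist (G i) (G y) :=
              dist_triangle4 _ _ _ _
          _ ≤ η := by linarith
      filter_upwards [hev1, hevK] with m h1m hKm
      haveI := hPm m
      have hintGm : Integrable (Gm m) (convPow (μs m) n) :=
        integrable_of_bdd _ (hGmuc m).continuous C (hGmb m)
      have hintG : Integrable G (convPow (μs m) n) :=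
        integrable_of_bdd _ hGuc.continuous C hGb
      have hintcut : Integrable (cut R) (convPow (μs m) n) :=
        integrable_of_bdd _ (cut_continuous R) 1 (cut_abs_le_one R)
      have hcont2 : Continuous (fun y => 2*C*(1 - cut R y)) :=
        continuous_const.mul (continuous_const.sub (cut_continuous R))
      have hbd2 : ∀ y, |2*C*(1 - cut R y)| ≤ 2*C := fun y => by
        rw [abs_mul, abs_of_nonneg (show (0:ℝ) ≤ 2*C by linarith),
          abs_of_nonneg (show (0:ℝ) ≤ 1 - cut R y by linarith [cut_le_one R y])]
        nlinarith [cut_nonneg R y]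
      have hintrhs2 : Integrable (fun y => 2*C*(1 - cut R y)) (convPow (μs m) n) :=
        integrable_of_bdd _ hcont2 (2*C) hbd2
      have hintrhs : Integrable (fun y => η + 2*C*(1 - cut R y)) (convPow (μs m) n) :=
        (integrable_const η).add hintrhs2
      have hηε : η * (2*C+2) = ε := by
        rw [hηdef]; field_simp
      rw [← integral_sub hintGm hintG]
      calc ‖∫ y, (Gm m y - G y) ∂(convPow (μs m) n)‖
          ≤ ∫ y, ‖Gm m y - G y‖ ∂(convPow (μs m) n) := norm_integral_le_integral_norm _
        _ ≤ ∫ y, (η + 2*C*(1 - cut R y)) ∂(convPow (μs m) n) := by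
            apply integral_mono (hintGm.sub hintG).norm hintrhs
            intro y
            show ‖Gm m y - G y‖ ≤ η + 2*C*(1 - cut R y)
            rw [Real.norm_eq_abs]
            by_cases hy : y ∈ Icc (-(R+1)) (R+1)
            · have := hKm y hy
              nlinarith [cut_le_one R y, cut_nonneg R y]
            · have hcut0 : cut R y = 0 := by
                apply cut_eq_zero
                rw [mem_Icc, not_and_or, not_le, not_le] at hy
                rcases le_total y 0 with hys | hys
                · rw [abs_of_nonpos hys]; rcases hy with h' | h' <;> linarith
                · rw [abs_of_nonneg hys]; rcases hy with h' | h' <;> linarith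
              rw [hcut0]
              calc |Gm m y - G y| ≤ |Gm m y| + |G y| := by
                    rw [sub_eq_add_neg]
                    exact (abs_add_le _ _).trans (by rw [abs_neg])
                _ ≤ C + C := add_le_add (hGmb m y) (hGb y)
                _ ≤ η + 2*C*(1-0) := by linarith
        _ = η + 2*C*(1 - ∫ y, cut R y ∂(convPow (μs m) n)) := by
            rw [integral_add (integrable_const _) hintrhs2,
              integral_const, integral_const_mul,
              integral_sub (integrable_const _) hintcut, integral_const]
            simp [measure_univ]
        _ ≤ η + 2*C*η := by nlinarith
        _ < ε := by nlinarith
    have hfinal := hdiff.add hIHG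
    simp only [zero_add, sub_add_cancel] at hfinal
    simp only [hrw, hrw']
    exact hfinal

end Key

section Final

lemma summable_coeff {l : ℝ} : Summable (fun n : ℕ => Real.exp (-l) * l ^ n / n.factorial) := by
  have := (Real.summable_pow_div_factorial l).mul_left (Real.exp (-l))
  simpa [mul_div_assoc] using this

lemma isFiniteMeasure_SigmaX (l x : ℝ) (hl : 0 < l) (ρ : Measure ℝ) [IsProbabilityMeasure ρ] :
    IsFiniteMeasure (SigmaX l x ρ) := by
  constructor
  rw [SigmaX, Measure.sum_apply _ MeasurableSet.univ]
  have heq : ∀ n : ℕ, (ENNReal.ofReal (Real.exp (-l) * l ^ n / n.factorial) •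
      ((Measure.dirac x).conv (convPow ρ n)).map (fun y => y / ((n : ℝ) + 1))) Set.univ
      = ENNReal.ofReal (Real.exp (-l) * l ^ n / n.factorial) := by
    intro n
    haveI := convPow_prob ρ n
    haveI : IsProbabilityMeasure
        (((Measure.dirac x).conv (convPow ρ n)).map (fun y => y / ((n:ℝ)+1))) :=
      Measure.isProbabilityMeasure_map (measurable_id.div_const _).aemeasurable
    simp [Measure.smul_apply, measure_univ]
  rw [tsum_congr heq,
    ← ENNReal.ofReal_tsum_of_nonneg (fun n => by positivity) summable_coeff]
  exact ENNReal.ofReal_lt_top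

lemma integral_SigmaX (l x : ℝ) (hl : 0 < l) (ρ : Measure ℝ) [IsProbabilityMeasure ρ]
    {φ : ℝ → ℝ} (hφ : Continuous φ) (C : ℝ) (hC : ∀ t, |φ t| ≤ C) :
    ∫ t, φ t ∂(SigmaX l x ρ) = ∑' n : ℕ, (Real.exp (-l) * l ^ n / n.factorial) *
      ∫ z, φ ((x + z) / ((n : ℝ) + 1)) ∂(convPow ρ n) := by
  haveI := isFiniteMeasure_SigmaX l x hl ρ
  have hint : Integrable φ (SigmaX l x ρ) := integrable_of_bdd _ hφ C hC
  rw [SigmaX] at hint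
  rw [SigmaX, integral_sum_measure hint]
  apply tsum_congr
  intro n
  haveI := convPow_prob ρ n
  rw [integral_smul_measure, ENNReal.toReal_ofReal (by positivity), smul_eq_mul]
  congr 1
  have hmeas : AEMeasurable (fun y : ℝ => y / ((n:ℝ)+1)) ((Measure.dirac x).conv (convPow ρ n)) := by
    fun_prop
  rw [integral_map hmeas hφ.aestronglyMeasurable]
  have hcomp : Continuous (fun y : ℝ => φ (y / ((n:ℝ)+1))) :=
    hφ.comp (continuous_id.div_const _)
  rw [integral_conv _ _ hcomp C (fun a => hC _), integral_dirac]


end Final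

theorem SigmaX_sequentially_continuous
    (l : ℝ) (hl : 0 < l) (x : ℝ)
    (ρ : Measure ℝ) (ρs : ℕ → Measure ℝ)
    (hρ : IsProbabilityMeasure ρ) (hρs : ∀ n, IsProbabilityMeasure (ρs n))
    (hconv : VagueTendsto ρs ρ) :
    VagueTendsto (fun n => SigmaX l x (ρs n)) (SigmaX l x ρ) := by
  haveI := hρ
  intro φ hφc hφs
  obtain ⟨C, hC⟩ := hφc.bounded_above_of_compact_support hφs
  have hC' : ∀ t, |φ t| ≤ C := fun t => by simpa [Real.norm_eq_abs] using hC t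
  have hC0 : 0 ≤ C := le_trans (abs_nonneg _) (hC' 0)
  have hφuc : UniformContinuous φ :=
    hφc.uniformContinuous_of_tendsto_cocompact hφs.is_zero_at_infty
  have hrw : ∀ m, ∫ t, φ t ∂(SigmaX l x (ρs m))
      = ∑' n : ℕ, (Real.exp (-l) * l ^ n / n.factorial) *
        ∫ z, φ ((x + z) / ((n : ℝ) + 1)) ∂(convPow (ρs m) n) := fun m => by
    haveI := hρs m
    exact integral_SigmaX l x hl (ρs m) hφc C hC'
  have hrw' : ∫ t, φ t ∂(SigmaX l x ρ)
      = ∑' n : ℕ, (Real.exp (-l) * l ^ n / n.factorial) *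
        ∫ z, φ ((x + z) / ((n : ℝ) + 1)) ∂(convPow ρ n) :=
    integral_SigmaX l x hl ρ hφc C hC'
  simp only [hrw, hrw']
  have hsum : Summable (fun n : ℕ => Real.exp (-l) * l ^ n / n.factorial * C) := by
    exact summable_coeff.mul_right C
  apply tendsto_tsum_of_dominated_convergence hsum
  · intro k
    apply Tendsto.const_mul
    have hlip : LipschitzWith 1 (fun y : ℝ => (x + y) / ((k:ℝ)+1)) := by
      apply LipschitzWith.of_dist_le_mul
      intro a b
      simp only [Real.dist_eq, NNReal.coe_one, one_mul]
      have h1 : (x+a)/((k:ℝ)+1) - (x+b)/((k:ℝ)+1) = (a-b)/((k:ℝ)+1) := by ring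
      rw [h1, abs_div, abs_of_nonneg (show (0:ℝ) ≤ (k:ℝ)+1 by positivity)]
      apply div_le_self (abs_nonneg _)
      simp
    have hucf : UniformContinuous (fun y : ℝ => φ ((x + y) / ((k:ℝ)+1))) :=
      hφuc.comp hlip.uniformContinuous
    exact key hρs hρ hconv k _ hucf C (fun a => hC' _)
  · apply Filter.Eventually.of_forall
    intro m k
    haveI := hρs m
    haveI := convPow_prob (ρs m) k
    rw [Real.norm_eq_abs, abs_mul, abs_of_nonneg (show (0:ℝ) ≤ Real.exp (-l) * l ^ k / k.factorial by positivity)]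
    apply mul_le_mul_of_nonneg_left _ (by positivity)
    have := norm_integral_le_of_norm_le_const (μ := convPow (ρs m) k)
      (f := fun z => φ ((x+z)/((k:ℝ)+1))) (C := C)
      (ae_of_all _ fun z => by simpa [Real.norm_eq_abs] using hC' _)
    simpa [Real.norm_eq_abs, measure_univ] using this
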